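/- Let X be a compact Hausdorff space and f ∈ C(X, ℂ) nowhere vanishing with ‖f‖∞ ≤ 1 and m = min|f|. For every λ with 1/2 ≤ λ ≤ (1+m)/2 there exist unimodular functions u₁, u₂ ∈ C(X, ℂ) with f = λu₁ + (1−λ)u₂; and for λ > (1+m)/2 no decomposition f = λu + (1−λ)g with |u| ≡ 1, ‖g‖∞ ≤ 1 exists. Hence λ(f) = (1+m)/2 where λ is the Aron–Lohman λ-function of C(X, ℂ). -/

import Mathlib

open Complex

theorem stmt_17 {X : Type*} [TopologicalSpace X] [CompactSpace X] [T2Space X] [Nonempty X]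
    (f : C(X, ℂ)) (hf0 : ∀ x, f x ≠ 0) (hf : ‖f‖ ≤ 1)
    (m : ℝ) (hm : IsLeast (Set.range fun x => ‖f x‖) m) :
    (∀ lam : ℝ, 1 / 2 ≤ lam → lam ≤ (1 + m) / 2 →
      ∃ u₁ u₂ : C(X, ℂ), (∀ x, ‖u₁ x‖ = 1) ∧ (∀ x, ‖u₂ x‖ = 1) ∧
        f = lam • u₁ + (1 - lam) • u₂) ∧
    (∀ lam : ℝ, (1 + m) / 2 < lam → lam ≤ 1 →
      ¬ ∃ u g : C(X, ℂ), (∀ x, ‖u x‖ = 1) ∧ ‖g‖ ≤ 1 ∧ f = lam • u + (1 - lam) • g) ∧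
    sSup {lam : ℝ | 0 < lam ∧ lam ≤ 1 ∧ ∃ u g : C(X, ℂ), (∀ x, ‖u x‖ = 1) ∧ ‖g‖ ≤ 1 ∧
        f = lam • u + (1 - lam) • g} = (1 + m) / 2 := by
  obtain ⟨hm_mem, hm_lb⟩ := hm
  obtain ⟨x₀, hx₀⟩ := hm_mem
  have hlb : ∀ x, m ≤ ‖f x‖ := fun x => hm_lb ⟨x, rfl⟩
  have hub : ∀ x, ‖f x‖ ≤ 1 := fun x => (f.norm_coe_le_norm x).trans hf
  have hm_pos : 0 < m := hx₀ ▸ norm_pos_iff.mpr (hf0 x₀)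
  have hm_le : m ≤ 1 := hx₀ ▸ hub x₀
  have part1 : ∀ lam : ℝ, 1 / 2 ≤ lam → lam ≤ (1 + m) / 2 →
      ∃ u₁ u₂ : C(X, ℂ), (∀ x, ‖u₁ x‖ = 1) ∧ (∀ x, ‖u₂ x‖ = 1) ∧
        f = lam • u₁ + (1 - lam) • u₂ := by
    intro lam h1 h2
    have hlam1 : lam ≤ 1 := by linarith
    rcases eq_or_lt_of_le hlam1 with heq1 | hlt1
    · -- lam = 1 : then m = 1 and f is unimodular
      have hm1 : m = 1 := by linarith
      refine ⟨f, 1, ?_, ?_, ?_⟩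
      · intro x
        have h1x := hlb x
        have h2x := hub x
        linarith
      · intro x; simp
      · subst heq1; ext x; simp
    · -- lam < 1
      have hlam0 : (0:ℝ) < lam := by linarith
      have ht0 : ∀ x, (0:ℝ) < ‖f x‖ := fun x => norm_pos_iff.mpr (hf0 x)
      have htc : Continuous fun x => ‖f x‖ := f.continuous.norm
      set a : X → ℝ := fun x => (‖f x‖ ^ 2 + 2 * lam - 1) / (2 * ‖f x‖) with ha_def
      have hac : Continuous a := by
        apply Continuous.div (by fun_prop) (by fun_prop)
        intro x; exact mul_ne_zero two_ne_zero (ht0 x).ne'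
      have hrange : ∀ x, 2 * lam - 1 ≤ ‖f x‖ := fun x => by linarith [hlb x]
      have ha_nonneg : ∀ x, 0 ≤ a x := by
        intro x
        have := hrange x
        have := ht0 x
        apply div_nonneg (by nlinarith) (by linarith)
      have ha_le : ∀ x, a x ≤ lam := by
        intro x
        have h1x := hrange x
        have h2x := hub x
        have h3x := ht0 x
        rw [ha_def, div_le_iff₀ (by linarith)]
        nlinarith
      set b : X → ℝ := fun x => Real.sqrt (lam ^ 2 - a x ^ 2) with hb_def
      have hbc : Continuous b := by fun_prop
      have hb_sq : ∀ x, b x ^ 2 = lam ^ 2 - a x ^ 2 := by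
        intro x
        apply Real.sq_sqrt
        nlinarith [ha_nonneg x, ha_le x]
      -- key: 2 * a x * ‖f x‖ = ‖f x‖^2 + 2*lam - 1
      have hkey : ∀ x, 2 * a x * ‖f x‖ = ‖f x‖ ^ 2 + 2 * lam - 1 := by
        intro x
        have hne : ‖f x‖ ≠ 0 := (ht0 x).ne'
        rw [ha_def]
        field_simp [hne]
      have habs1 : ∀ x, ‖((a x : ℂ) + (b x : ℂ) * I)‖ = lam := by
        intro x
        rw [Complex.norm_add_mul_I]
        rw [show a x ^ 2 + b x ^ 2 = lam ^ 2 by rw [hb_sq x]; ring]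
        exact Real.sqrt_sq hlam0.le
      have habs2 : ∀ x, ‖((‖f x‖ : ℂ) - ((a x : ℂ) + (b x : ℂ) * I))‖ = 1 - lam := by
        intro x
        have : ((‖f x‖ : ℂ) - ((a x : ℂ) + (b x : ℂ) * I))
            = ((‖f x‖ - a x : ℝ) : ℂ) + ((- b x : ℝ) : ℂ) * I := by
          push_cast; ring
        rw [this, Complex.norm_add_mul_I]
        have : (‖f x‖ - a x) ^ 2 + (-b x) ^ 2 = (1 - lam) ^ 2 := by
          have := hb_sq x
          have := hkey x
          nlinarith
        rw [this]
        exact Real.sqrt_sq (by linarith)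
      -- unimodular part ω of f
      have hωc : Continuous fun x => f x / (‖f x‖ : ℂ) := by
        apply Continuous.div f.continuous (by fun_prop)
        intro x
        exact Complex.ofReal_ne_zero.mpr (ht0 x).ne'
      have hω_abs : ∀ x, ‖f x / (‖f x‖ : ℂ)‖ = 1 := by
        intro x
        rw [norm_div, Complex.norm_of_nonneg (ht0 x).le]
        exact div_self (ht0 x).ne'
      have hω_mul : ∀ x, (f x / (‖f x‖ : ℂ)) * (‖f x‖ : ℂ) = f x := by
        intro x
        rw [div_mul_cancel₀]
        exact Complex.ofReal_ne_zero.mpr (ht0 x).ne'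
      refine ⟨⟨fun x => (f x / (‖f x‖ : ℂ)) * ((a x : ℂ) + (b x : ℂ) * I) / (lam : ℂ), ?_⟩,
              ⟨fun x => (f x / (‖f x‖ : ℂ)) * ((‖f x‖ : ℂ) - ((a x : ℂ) + (b x : ℂ) * I)) / ((1 - lam : ℝ) : ℂ), ?_⟩,
              ?_, ?_, ?_⟩
      · exact Continuous.div (by fun_prop) continuous_const
          (fun x => Complex.ofReal_ne_zero.mpr hlam0.ne')
      · exact Continuous.div (by fun_prop) continuous_const
          (fun x => Complex.ofReal_ne_zero.mpr (sub_ne_zero.mpr hlt1.ne'))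
      · intro x
        simp only [ContinuousMap.coe_mk]
        rw [norm_div, norm_mul]
        rw [show ‖f x / (‖f x‖:ℂ)‖ = 1 from hω_abs x]
        rw [show ‖((a x : ℂ) + (b x : ℂ) * I)‖ = lam from habs1 x]
        rw [Complex.norm_real, Real.norm_of_nonneg hlam0.le, one_mul]
        exact div_self hlam0.ne'
      · intro x
        simp only [ContinuousMap.coe_mk]
        rw [norm_div, norm_mul]
        rw [show ‖f x / (‖f x‖:ℂ)‖ = 1 from hω_abs x]
        rw [show ‖((‖f x‖ : ℂ) - ((a x : ℂ) + (b x : ℂ) * I))‖ = 1 - lam from habs2 x]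
        rw [Complex.norm_real, Real.norm_of_nonneg (by linarith : (0:ℝ) ≤ 1 - lam), one_mul]
        exact div_self (sub_ne_zero.mpr hlt1.ne')
      · ext x
        simp only [ContinuousMap.add_apply, ContinuousMap.smul_apply, ContinuousMap.coe_mk,
          Complex.real_smul]
        have hne1 : (lam : ℂ) ≠ 0 := Complex.ofReal_ne_zero.mpr hlam0.ne'
        have hne2 : ((1 - lam : ℝ) : ℂ) ≠ 0 := Complex.ofReal_ne_zero.mpr (sub_ne_zero.mpr hlt1.ne')
        have key : ∀ (c w p : ℂ), c ≠ 0 → (c * (w * p / c) : ℂ) = w * p := by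
          intro c w p hc
          field_simp
        rw [key _ _ _ hne1, key _ _ _ hne2, ← mul_add,
          show ((a x : ℂ) + (b x : ℂ) * I) + ((‖f x‖ : ℂ) - ((a x : ℂ) + (b x : ℂ) * I))
            = (‖f x‖ : ℂ) by ring]
        exact (hω_mul x).symm
  have part2 : ∀ lam : ℝ, (1 + m) / 2 < lam → lam ≤ 1 →
      ¬ ∃ u g : C(X, ℂ), (∀ x, ‖u x‖ = 1) ∧ ‖g‖ ≤ 1 ∧ f = lam • u + (1 - lam) • g := by
    intro lam hlt hle ⟨u, g, hu, hg, heq⟩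
    have hx : f x₀ = lam • u x₀ + (1 - lam) • g x₀ := by
      rw [heq]; simp
    have h1 : ‖lam • u x₀‖ - ‖-((1 - lam) • g x₀)‖ ≤ ‖f x₀‖ := by
      calc ‖lam • u x₀‖ - ‖-((1 - lam) • g x₀)‖ ≤ ‖lam • u x₀ - -((1 - lam) • g x₀)‖ :=
            norm_sub_norm_le _ _
        _ = ‖f x₀‖ := by rw [hx]; ring_nf
    have h2 : ‖lam • u x₀‖ = lam := by
      rw [norm_smul, hu x₀, Real.norm_of_nonneg (by linarith), mul_one]
    have h3 : ‖-((1 - lam) • g x₀)‖ ≤ 1 - lam := by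
      rw [norm_neg, norm_smul, Real.norm_of_nonneg (by linarith)]
      have := (g.norm_coe_le_norm x₀).trans hg
      nlinarith
    have hx₀' : ‖f x₀‖ = m := hx₀
    rw [hx₀'] at h1
    linarith
  refine ⟨part1, part2, ?_⟩
  have hmem : (1 + m) / 2 ∈ {lam : ℝ | 0 < lam ∧ lam ≤ 1 ∧ ∃ u g : C(X, ℂ),
      (∀ x, ‖u x‖ = 1) ∧ ‖g‖ ≤ 1 ∧ f = lam • u + (1 - lam) • g} := by
    obtain ⟨u₁, u₂, hu₁, hu₂, heq⟩ := part1 ((1 + m) / 2) (by linarith) le_rfl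
    exact ⟨by linarith, by linarith, u₁, u₂, hu₁,
      (u₂.norm_le zero_le_one).mpr fun x => (hu₂ x).le, heq⟩
  have hub' : ∀ lam ∈ {lam : ℝ | 0 < lam ∧ lam ≤ 1 ∧ ∃ u g : C(X, ℂ),
      (∀ x, ‖u x‖ = 1) ∧ ‖g‖ ≤ 1 ∧ f = lam • u + (1 - lam) • g}, lam ≤ (1 + m) / 2 := by
    rintro lam ⟨hpos, hle1, hdec⟩
    by_contra hc
    push_neg at hc
    exact part2 lam hc hle1 hdec
  exact le_antisymm (csSup_le ⟨_, hmem⟩ hub') (le_csSup ⟨_, hub'⟩ hmem)
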